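/- arXiv:2003.07164 — 2 statements merged into one kernel-verified Lean document; each statement's English description precedes it below -/
import Mathlib

section
/- Let p be an odd prime, ω = exp(2πi/p), and define on ℂ^p (indexed by ZMod p) the shift X e_n = e_{n+1}, the clock Z e_n = ω^n e_n, and the Heisenberg–Weyl displacement operators D_{(u,v)} = ω^{u·v·2^{-1}} X^u Z^v for u,v ∈ ZMod p, where 2^{-1} is the inverse of 2 in ZMod p. Then the phase point operator at the origin, A_{(0,0)} = (1/p) Σ_{u,v ∈ ZMod p} D_{(u,v)}, equals the parity operator P defined by P e_k = e_{−k}. -/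
open scoped BigOperators
open Complex Matrix

noncomputable def omg (p : ℕ) : ℂ := Complex.exp (2 * Real.pi * Complex.I / p)

noncomputable def Hmat (p : ℕ) : Matrix (ZMod p) (ZMod p) ℂ :=
  Matrix.of fun j k => (Real.sqrt p : ℂ)⁻¹ * omg p ^ ((j * k : ZMod p).val)

noncomputable def VS (p : ℕ) : Matrix (ZMod p) (ZMod p) ℂ :=
  Matrix.diagonal fun k => omg p ^ (((2 : ZMod p)⁻¹ * k ^ 2).val)

def Xmat (p : ℕ) : Matrix (ZMod p) (ZMod p) ℂ :=
  Matrix.of fun j k => if j = k + 1 then 1 else 0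

noncomputable def Zmat (p : ℕ) : Matrix (ZMod p) (ZMod p) ℂ :=
  Matrix.diagonal fun k => omg p ^ (k.val)

noncomputable def Dmat (p : ℕ) [NeZero p] (u v : ZMod p) : Matrix (ZMod p) (ZMod p) ℂ :=
  omg p ^ (((2 : ZMod p)⁻¹ * u * v).val) • (Xmat p ^ u.val * Zmat p ^ v.val)

noncomputable def A0 (p : ℕ) [NeZero p] : Matrix (ZMod p) (ZMod p) ℂ :=
  (p : ℂ)⁻¹ • ∑ u : ZMod p, ∑ v : ZMod p, Dmat p u v

noncomputable def Amat (p : ℕ) [NeZero p] (χ : ZMod p × ZMod p) : Matrix (ZMod p) (ZMod p) ℂ :=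
  Dmat p χ.1 χ.2 * A0 p * (Dmat p χ.1 χ.2)ᴴ

noncomputable def W (p : ℕ) [NeZero p] (χ : ZMod p × ZMod p) (v : ZMod p → ℂ) : ℂ :=
  (p : ℂ)⁻¹ * (star v ⬝ᵥ (Amat p χ).mulVec v)

def Pmat (p : ℕ) : Matrix (ZMod p) (ZMod p) ℂ :=
  Matrix.of fun j k => if j = -k then 1 else 0


lemma omg_prim (p : ℕ) [NeZero p] : IsPrimitiveRoot (omg p) p :=
  Complex.isPrimitiveRoot_exp p (NeZero.ne p)

lemma omg_pow_p (p : ℕ) [NeZero p] : omg p ^ p = 1 := (omg_prim p).pow_eq_one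

lemma omg_pow_mod (p : ℕ) [NeZero p] (n : ℕ) : omg p ^ (n % p) = omg p ^ n := by
  conv_rhs => rw [← Nat.div_add_mod n p]
  rw [pow_add, pow_mul, omg_pow_p, one_pow, one_mul]

lemma omg_val_add (p : ℕ) [NeZero p] (a b : ZMod p) :
    omg p ^ (a + b).val = omg p ^ a.val * omg p ^ b.val := by
  rw [ZMod.val_add, omg_pow_mod, pow_add]

lemma omg_val_mul (p : ℕ) [NeZero p] (a b : ZMod p) :
    omg p ^ (a * b).val = (omg p ^ a.val) ^ b.val := by
  rw [ZMod.val_mul, omg_pow_mod, pow_mul]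

lemma sum_pow_val (p : ℕ) [NeZero p] (x : ℂ) :
    ∑ v : ZMod p, x ^ v.val = ∑ i ∈ Finset.range p, x ^ i := by
  refine Finset.sum_nbij' (fun v => v.val) (fun i => (i : ZMod p)) ?_ ?_ ?_ ?_ ?_
  · intro a _; simpa using ZMod.val_lt a
  · intro a _; simp
  · intro a _; simp [ZMod.natCast_val, ZMod.cast_id]
  · intro a ha; simp at ha; exact ZMod.val_cast_of_lt ha
  · intro a _; rfl

lemma sum_omg (p : ℕ) [NeZero p] (hp1 : 1 < p) (c : ZMod p) :
    ∑ v : ZMod p, omg p ^ ((v * c).val) = if c = 0 then (p : ℂ) else 0 := by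
  split_ifs with hc
  · subst hc; simp [ZMod.val_zero]
  · have hne : omg p ^ c.val ≠ 1 := by
      have h0 : 0 < c.val := Nat.pos_of_ne_zero fun h => hc ((ZMod.val_eq_zero _).mp h)
      exact (omg_prim p).pow_ne_one_of_pos_of_lt h0.ne' (ZMod.val_lt c)
    calc ∑ v : ZMod p, omg p ^ ((v * c).val)
        = ∑ v : ZMod p, (omg p ^ c.val) ^ v.val := by
          refine Finset.sum_congr rfl fun v _ => ?_
          rw [mul_comm, omg_val_mul]
      _ = ∑ i ∈ Finset.range p, (omg p ^ c.val) ^ i := sum_pow_val p _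
      _ = ((omg p ^ c.val) ^ p - 1) / (omg p ^ c.val - 1) := geom_sum_eq hne p
      _ = 0 := by
          rw [← pow_mul, mul_comm, pow_mul, omg_pow_p, one_pow, sub_self, zero_div]

lemma Xmat_pow (p : ℕ) [NeZero p] (n : ℕ) (j k : ZMod p) :
    (Xmat p ^ n) j k = if j = k + n then 1 else 0 := by
  induction n generalizing j with
  | zero => simp [Matrix.one_apply, eq_comm]
  | succ n ih =>
    rw [pow_succ', Matrix.mul_apply]
    rw [Finset.sum_eq_single (j - 1)]
    · rw [ih]
      simp only [Xmat, Matrix.of_apply, sub_add_cancel, if_true, one_mul,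
        sub_eq_iff_eq_add]
      push_cast
      simp only [add_assoc]
    · intro b _ hb
      simp only [Xmat, Matrix.of_apply]
      rw [if_neg, zero_mul]
      intro h; exact hb (by rw [h]; ring)
    · intro h; exact absurd (Finset.mem_univ _) h

lemma XZ_apply (p : ℕ) [NeZero p] (a b : ℕ) (j k : ZMod p) :
    (Xmat p ^ a * Zmat p ^ b) j k =
      (if j = k + a then 1 else 0) * (omg p ^ k.val) ^ b := by
  have hZ : Zmat p ^ b = Matrix.diagonal fun k => (omg p ^ k.val) ^ b := by
    rw [Zmat, Matrix.diagonal_pow]; rfl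
  rw [hZ, Matrix.mul_diagonal, Xmat_pow]

theorem phase_point_operator_at_origin_eq_parity (p : ℕ) [Fact p.Prime] (hodd : Odd p) :
    A0 p = Pmat p := by
  have hp : p.Prime := Fact.out
  have hp1 : 1 < p := hp.one_lt
  have h2 : (2 : ZMod p) ≠ 0 := by
    intro h
    have hd : p ∣ 2 := (CharP.cast_eq_zero_iff (ZMod p) p 2).mp (by exact_mod_cast h)
    have hpe := (Nat.prime_dvd_prime_iff_eq hp Nat.prime_two).mp hd
    rw [hpe] at hodd
    simp [Nat.odd_iff] at hodd
  ext j k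
  simp only [A0, Matrix.smul_apply, Matrix.sum_apply, smul_eq_mul]
  have hD : ∀ u v : ZMod p, (Dmat p u v) j k =
      if u = j - k then omg p ^ ((v * ((2:ZMod p)⁻¹ * (j+k))).val) else 0 := by
    intro u v
    rw [Dmat, Matrix.smul_apply, smul_eq_mul, XZ_apply]
    simp only [ZMod.natCast_val, ZMod.cast_id]
    by_cases hu : u = j - k
    · subst hu
      rw [if_pos (by ring), if_pos rfl, one_mul, ← omg_val_mul p k v, ← omg_val_add]
      congr 1
      congr 1
      linear_combination (-(k*v)) * inv_mul_cancel₀ h2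
    · rw [if_neg (fun h => hu (by rw [h]; ring)), if_neg hu, zero_mul, mul_zero]
  simp only [hD]
  rw [Finset.sum_comm]
  simp only [Finset.sum_ite_eq' Finset.univ (j - k), Finset.mem_univ, if_true]
  rw [sum_omg p hp1]
  have hc : ((2:ZMod p)⁻¹ * (j+k) = 0) ↔ j = -k := by
    rw [mul_eq_zero]
    constructor
    · rintro (h | h)
      · exact absurd h (inv_ne_zero h2)
      · exact eq_neg_of_add_eq_zero_left h
    · intro h; right; rw [h]; ring
  by_cases hjk : j = -k
  · rw [if_pos (hc.mpr hjk)]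
    have hpne : (p : ℂ) ≠ 0 := Nat.cast_ne_zero.mpr hp.ne_zero
    simp [Pmat, hjk, inv_mul_cancel₀ hpne]
  · rw [if_neg (fun h => hjk (hc.mp h))]
    simp [Pmat, hjk]
end

section
/- Let ω = exp(2πi/3), P the parity operator on ℂ³ given by P e_k = e_{−k} (indices in ZMod 3), and for a unit vector v ∈ ℂ³ let W_{(0,0)}(v) = (1/3)·⟨v, P v⟩ (the value of the discrete Wigner function at the origin, since A_{(0,0)} = P). Then W_{(0,0)}(v) ≥ −1/3 for every unit vector v, and equality W_{(0,0)}(v) = −1/3 holds if and only if v is a scalar multiple of the strange state (e_1 − e_2)/√2. -/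
open scoped BigOperators
open Complex Matrix

open scoped ComplexOrder

/-- The qutrit strange state `S = (e₁ - e₂)/√2`. -/
noncomputable def strangeState : ZMod 3 → ℂ :=
  (Real.sqrt 2 : ℂ)⁻¹ • ((Pi.single 1 1 : ZMod 3 → ℂ) - (Pi.single 2 1 : ZMod 3 → ℂ))

lemma sum3 (f : ZMod 3 → ℂ) : ∑ x : ZMod 3, f x = f 0 + f 1 + f 2 :=
  Fin.sum_univ_three f

lemma conj_mul_self (z : ℂ) : starRingEnd ℂ z * z = (Complex.normSq z : ℂ) := by
  rw [mul_comm, Complex.mul_conj]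

lemma ss0 : strangeState 0 = 0 := by simp [strangeState, Pi.single_apply]; decide
lemma ss1 : strangeState 1 = (Real.sqrt 2 : ℂ)⁻¹ := by
  simp [strangeState, Pi.single_apply]; decide
lemma ss2 : strangeState 2 = -(Real.sqrt 2 : ℂ)⁻¹ := by
  have e1 : ((2:ZMod 3) = 1) = False := by decide
  simp [strangeState, Pi.single_apply, e1]


theorem wigner_origin_min (v : ZMod 3 → ℂ) (hv : star v ⬝ᵥ v = 1) :
    -(1 / 3 : ℂ) ≤ (1 / 3 : ℂ) * (star v ⬝ᵥ (Pmat 3).mulVec v) ∧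
    ((1 / 3 : ℂ) * (star v ⬝ᵥ (Pmat 3).mulVec v) = -(1 / 3) ↔
      ∃ c : ℂ, v = c • strangeState) := by
  have h1 : ((2:ZMod 3) = 0) = False := by decide
  have h2 : ((1:ZMod 3) = -1) = False := by decide
  have h3 : ((1:ZMod 3) = -2) = True := by decide
  have h4 : ((2:ZMod 3) = -1) = True := by decide
  have h5 : ((2:ZMod 3) = -2) = False := by decide
  set a := v 0 with ha; set b := v 1 with hb; set c := v 2 with hc
  have hE : star v ⬝ᵥ (Pmat 3).mulVec v
      = starRingEnd ℂ a * a + starRingEnd ℂ b * c + starRingEnd ℂ c * b := by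
    simp [Pmat, mulVec, dotProduct, sum3, Pi.star_apply, h1, h2, h3, h4, h5]; rfl
  have hn : starRingEnd ℂ a * a + starRingEnd ℂ b * b + starRingEnd ℂ c * c = 1 := by
    simpa [dotProduct, sum3, Pi.star_apply] using hv
  have key : star v ⬝ᵥ (Pmat 3).mulVec v + 1
      = ((2 * Complex.normSq a + Complex.normSq (b + c) : ℝ) : ℂ) := by
    rw [hE, ← hn]
    push_cast
    rw [← conj_mul_self a, ← conj_mul_self (b + c)]
    simp only [map_add]
    ring
  constructor
  · rw [← sub_nonneg]
    have : (1 / 3 : ℂ) * (star v ⬝ᵥ (Pmat 3).mulVec v) - -(1 / 3)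
        = (1/3 : ℂ) * (star v ⬝ᵥ (Pmat 3).mulVec v + 1) := by ring
    rw [this, key]
    have hr : (0:ℝ) ≤ 2 * Complex.normSq a + Complex.normSq (b + c) :=
      add_nonneg (by nlinarith [Complex.normSq_nonneg a]) (Complex.normSq_nonneg (b+c))
    have h13 : (1/3 : ℂ) * ((2 * Complex.normSq a + Complex.normSq (b + c) : ℝ) : ℂ)
        = (((1/3) * (2 * Complex.normSq a + Complex.normSq (b + c)) : ℝ) : ℂ) := by push_cast; ring
    rw [h13]
    exact_mod_cast mul_nonneg (by norm_num) hr
  · constructor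
    · intro heq
      have h0 : star v ⬝ᵥ (Pmat 3).mulVec v + 1 = 0 := by
        have := heq
        field_simp at this
        rw [this]; ring
      rw [key] at h0
      have hr0 : 2 * Complex.normSq a + Complex.normSq (b + c) = 0 := by exact_mod_cast h0
      have ha0 : Complex.normSq a = 0 := by nlinarith [Complex.normSq_nonneg a, Complex.normSq_nonneg (b+c)]
      have hbc : Complex.normSq (b + c) = 0 := by nlinarith [Complex.normSq_nonneg a]
      have ha0' : a = 0 := by rwa [Complex.normSq_eq_zero] at ha0
      have hbc' : c = -b := by
        have := Complex.normSq_eq_zero.mp hbc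
        linear_combination this
      refine ⟨b * (Real.sqrt 2 : ℂ), ?_⟩
      funext i
      have hall : ∀ j : ZMod 3, j = 0 ∨ j = 1 ∨ j = 2 := by decide
      have hi := hall i
      have hs2 : (Real.sqrt 2 : ℂ) ≠ 0 :=
        Complex.ofReal_ne_zero.mpr (Real.sqrt_ne_zero'.mpr (by norm_num))
      rcases hi with rfl | rfl | rfl
      · simp [ss0, ← ha, ha0']
      · rw [Pi.smul_apply, ss1, smul_eq_mul, ← hb]
        field_simp
      · rw [Pi.smul_apply, ss2, smul_eq_mul, ← hc, hbc']
        field_simp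
    · rintro ⟨d, rfl⟩
      have hA : a = 0 := by rw [ha, Pi.smul_apply, ss0, smul_zero]
      have hC : c = -b := by
        rw [hc, hb, Pi.smul_apply, Pi.smul_apply, ss1, ss2, smul_eq_mul, smul_eq_mul]; ring
      rw [hE, hA, hC]
      have hn' : starRingEnd ℂ b * b + starRingEnd ℂ b * b = 1 := by
        rw [hA, hC] at hn; simpa using hn
      simp only [map_zero, zero_mul, map_neg, mul_neg, neg_mul]
      linear_combination -(1/3 : ℂ) * hn'
end
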